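/- (Interior-bead winding marginal in bosonic PIMD with PBC.) Let Pr(σ, w) = exp(−βE^{σ,w}) / ( ∑_{σ'} ∑_{w'} exp(−βE^{σ',w'}) ) be the Boltzmann distribution over pairs of a permutation σ of Fin N and a winding assignment w : Fin N → Fin P → Λ. Then for every particle ℓ, every interior spring index 1 ≤ j ≤ P−1, and every w₀ ∈ Λ, the marginal probability ∑_{σ} ∑_{w : w_ℓ^j = w₀} Pr(σ, w) equals μ(r_ℓ^j, r_ℓ^{j+1}, w₀) / ∑_{w'∈Λ} μ(r_ℓ^j, r_ℓ^{j+1}, w'); in particular it is independent of the permutation structure. -/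

import Mathlib

open Finset Real

noncomputable section

/-- Winding window: integer vectors `w : Fin d → ℤ` with `-W ≤ w i ≤ W` in every coordinate. -/
def windowSet (d W : ℕ) : Finset (Fin d → ℤ) :=
  Fintype.piFinset fun _ => Finset.Icc (-(W : ℤ)) (W : ℤ)

/-- The set of all winding assignments `w : Fin N → Fin P → Λ`. -/
def WAll (N P d W : ℕ) : Finset (Fin N → Fin P → Fin d → ℤ) :=
  Fintype.piFinset fun _ => Fintype.piFinset fun _ => windowSet d W

/-- Gaussian spring weight `μ(x, y, w) = exp(-βc ∑ᵢ (xᵢ + wᵢ L - yᵢ)²)`. -/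
def mu (d : ℕ) (β c L : ℝ) (x y : Fin d → ℝ) (w : Fin d → ℤ) : ℝ :=
  Real.exp (-(β * c * ∑ i, (x i + (w i : ℝ) * L - y i) ^ 2))

/-- Configuration spring energy `E^{σ,w}`: the bead after the last bead of particle `ℓ`
is the first bead of particle `σ(ℓ)`. -/
def Eperm (N P d : ℕ) [NeZero P] (c L : ℝ) (r : Fin N → Fin P → Fin d → ℝ)
    (σ : Equiv.Perm (Fin N)) (w : Fin N → Fin P → Fin d → ℤ) : ℝ :=
  c * ∑ ℓ : Fin N, ∑ j : Fin P, ∑ i : Fin d,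
    (r ℓ j i + (w ℓ j i : ℝ) * L -
      (if h : j.val + 1 < P then r ℓ ⟨j.val + 1, h⟩ i else r (σ ℓ) 0 i)) ^ 2

/-- interior-bead winding marginal in bosonic PIMD with PBC. For an
interior spring `(ℓ, j)` (with `j + 1 ≤ P - 1`... i.e. `j` not the last bead) and any
`w₀ ∈ Λ`, the marginal Boltzmann probability that the winding of that spring is `w₀`
equals the single-spring Gaussian probability, independently of the permutations. -/
theorem stmt9 (N P d W : ℕ) [NeZero N] [NeZero P] (hd : 0 < d)
    (β L c : ℝ) (hβ : 0 < β) (hL : 0 < L) (hc : 0 < c)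
    (r : Fin N → Fin P → Fin d → ℝ)
    (ℓ : Fin N) (j : Fin P) (hj : j.val + 1 < P)
    (w₀ : Fin d → ℤ) (hw₀ : w₀ ∈ windowSet d W) :
    ∑ σ : Equiv.Perm (Fin N),
        ∑ w ∈ (WAll N P d W).filter (fun w => w ℓ j = w₀),
          Real.exp (-(β * Eperm N P d c L r σ w)) /
            (∑ σ' : Equiv.Perm (Fin N), ∑ w' ∈ WAll N P d W,
              Real.exp (-(β * Eperm N P d c L r σ' w')))
      = mu d β c L (r ℓ j) (r ℓ ⟨j.val + 1, hj⟩) w₀ /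
          ∑ w' ∈ windowSet d W, mu d β c L (r ℓ j) (r ℓ ⟨j.val + 1, hj⟩) w' := by
  classical
  set jp : Fin P := ⟨j.val + 1, hj⟩ with hjp
  set Sj : (Fin d → ℤ) → ℝ := fun v => ∑ i, (r ℓ j i + (v i : ℝ) * L - r ℓ jp i) ^ 2 with hSj
  set μf : (Fin d → ℤ) → ℝ := fun v => mu d β c L (r ℓ j) (r ℓ jp) v with hμf
  set R : Equiv.Perm (Fin N) → (Fin N → Fin P → Fin d → ℤ) → ℝ :=
    fun σ w => Real.exp (-(β * (Eperm N P d c L r σ w - c * Sj (w ℓ j)))) with hR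
  have hdecomp : ∀ σ w, Real.exp (-(β * Eperm N P d c L r σ w)) = μf (w ℓ j) * R σ w := by
    intro σ w
    rw [hμf]
    show Real.exp _ = Real.exp _ * Real.exp _
    rw [← Real.exp_add]
    congr 1
    ring
  set upd : (Fin N → Fin P → Fin d → ℤ) → (Fin d → ℤ) → (Fin N → Fin P → Fin d → ℤ) :=
    fun w v => Function.update w ℓ (Function.update (w ℓ) j v) with hupd
  have hupd_eval : ∀ w v, upd w v ℓ j = v := by intro w v; simp [hupd]
  have hupd_ne : ∀ w v ℓ' j', ¬(ℓ' = ℓ ∧ j' = j) → upd w v ℓ' j' = w ℓ' j' := by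
    intro w v ℓ' j' h
    by_cases hne : ℓ' = ℓ
    · have hj' : j' ≠ j := fun hh => h ⟨hne, hh⟩
      rw [hne]
      simp [hupd, Function.update_of_ne hj']
    · simp [hupd, Function.update_of_ne hne]
  have hupd_upd : ∀ w v, upd (upd w v) (w ℓ j) = w := by
    intro w v
    simp [hupd, Function.update_idem]
  have hupd_mem : ∀ w ∈ WAll N P d W, ∀ v ∈ windowSet d W, upd w v ∈ WAll N P d W := by
    intro w hw v hv
    simp only [WAll, Fintype.mem_piFinset] at hw ⊢
    intro ℓ' j'
    by_cases hcase : ℓ' = ℓ ∧ j' = j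
    · rw [hcase.1, hcase.2, hupd_eval]; exact hv
    · rw [hupd_ne w v ℓ' j' hcase]; exact hw ℓ' j'
  -- energy invariance
  have hE : ∀ σ w v, Eperm N P d c L r σ (upd w v) - c * Sj v
      = Eperm N P d c L r σ w - c * Sj (w ℓ j) := by
    intro σ w v
    have key : ∀ u : Fin N → Fin P → Fin d → ℤ,
        Eperm N P d c L r σ u = c * (Sj (u ℓ j) +
          ∑ p ∈ (univ : Finset (Fin N × Fin P)).erase (ℓ, j),
            ∑ i, (r p.1 p.2 i + (u p.1 p.2 i : ℝ) * L -
              (if h : p.2.val + 1 < P then r p.1 ⟨p.2.val + 1, h⟩ i else r (σ p.1) 0 i)) ^ 2) := by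
      intro u
      rw [Eperm]
      congr 1
      have hpt : (∑ ℓ' : Fin N, ∑ j' : Fin P,
          ∑ i, (r ℓ' j' i + (u ℓ' j' i : ℝ) * L -
            (if h : j'.val + 1 < P then r ℓ' ⟨j'.val + 1, h⟩ i else r (σ ℓ') 0 i)) ^ 2)
          = ∑ p : Fin N × Fin P,
            ∑ i, (r p.1 p.2 i + (u p.1 p.2 i : ℝ) * L -
              (if h : p.2.val + 1 < P then r p.1 ⟨p.2.val + 1, h⟩ i else r (σ p.1) 0 i)) ^ 2 := by
        rw [Fintype.sum_prod_type]
      rw [hpt, ← Finset.add_sum_erase _ _ (mem_univ ((ℓ, j) : Fin N × Fin P))]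
      congr 1
      simp only [dif_pos hj]
      rfl
    have herase : ∀ v',
        (∑ p ∈ (univ : Finset (Fin N × Fin P)).erase (ℓ, j),
          ∑ i, (r p.1 p.2 i + ((upd w v') p.1 p.2 i : ℝ) * L -
            (if h : p.2.val + 1 < P then r p.1 ⟨p.2.val + 1, h⟩ i else r (σ p.1) 0 i)) ^ 2)
        = ∑ p ∈ (univ : Finset (Fin N × Fin P)).erase (ℓ, j),
          ∑ i, (r p.1 p.2 i + ((w p.1 p.2 i : ℤ) : ℝ) * L -
            (if h : p.2.val + 1 < P then r p.1 ⟨p.2.val + 1, h⟩ i else r (σ p.1) 0 i)) ^ 2 := by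
      intro v'
      refine Finset.sum_congr rfl fun p hp => ?_
      have hpne : p ≠ (ℓ, j) := (Finset.mem_erase.mp hp).1
      have : upd w v' p.1 p.2 = w p.1 p.2 := by
        refine hupd_ne w v' p.1 p.2 fun hh => hpne ?_
        exact Prod.ext hh.1 hh.2
      rw [this]
    rw [key, key, hupd_eval, herase]
    ring
  have hRinv : ∀ σ w v, R σ (upd w v) = R σ w := by
    intro σ w v
    simp only [hR]
    rw [hupd_eval, hE]
  -- per-σ sums
  set T : Equiv.Perm (Fin N) → ℝ :=
    fun σ => ∑ w ∈ (WAll N P d W).filter (fun w => w ℓ j = w₀), R σ w with hT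
  have hfiber : ∀ σ, ∀ v ∈ windowSet d W,
      ∑ w ∈ (WAll N P d W).filter (fun w => w ℓ j = v), R σ w = T σ := by
    intro σ v hv
    refine Finset.sum_nbij' (i := fun w => upd w w₀) (j := fun w => upd w v) ?_ ?_ ?_ ?_ ?_
    · intro w hw
      rw [Finset.mem_filter] at hw ⊢
      exact ⟨hupd_mem w hw.1 w₀ hw₀, hupd_eval w w₀⟩
    · intro w hw
      rw [Finset.mem_filter] at hw ⊢
      exact ⟨hupd_mem w hw.1 v hv, hupd_eval w v⟩
    · intro w hw
      rw [Finset.mem_filter] at hw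
      rw [← hw.2]
      exact hupd_upd w w₀
    · intro w hw
      rw [Finset.mem_filter] at hw
      rw [← hw.2]
      exact hupd_upd w v
    · intro w hw
      rw [hRinv]
  have hmaps : ∀ w ∈ WAll N P d W, w ℓ j ∈ windowSet d W := by
    intro w hw
    simp only [WAll, Fintype.mem_piFinset] at hw
    exact hw ℓ j
  have hA : ∀ σ, ∑ w ∈ (WAll N P d W).filter (fun w => w ℓ j = w₀),
      Real.exp (-(β * Eperm N P d c L r σ w)) = μf w₀ * T σ := by
    intro σ
    rw [hT, Finset.mul_sum]
    refine Finset.sum_congr rfl fun w hw => ?_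
    rw [hdecomp, (Finset.mem_filter.mp hw).2]
  have hB : ∀ σ, ∑ w ∈ WAll N P d W, Real.exp (-(β * Eperm N P d c L r σ w))
      = (∑ v ∈ windowSet d W, μf v) * T σ := by
    intro σ
    rw [← Finset.sum_fiberwise_of_maps_to hmaps, Finset.sum_mul]
    refine Finset.sum_congr rfl fun v hv => ?_
    rw [← hfiber σ v hv, Finset.mul_sum]
    refine Finset.sum_congr rfl fun w hw => ?_
    rw [hdecomp, (Finset.mem_filter.mp hw).2]
  -- positivity
  have hTpos : ∀ σ, 0 < T σ := by
    intro σ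
    refine Finset.sum_pos (fun w _ => Real.exp_pos _) ?_
    refine ⟨fun _ _ => w₀, Finset.mem_filter.mpr ⟨?_, rfl⟩⟩
    simp only [WAll, Fintype.mem_piFinset]
    exact fun _ _ => hw₀
  have hTSpos : 0 < ∑ σ : Equiv.Perm (Fin N), T σ :=
    Finset.sum_pos (fun σ _ => hTpos σ) ⟨1, Finset.mem_univ _⟩
  -- assemble
  have hnum : ∑ σ : Equiv.Perm (Fin N), ∑ w ∈ (WAll N P d W).filter (fun w => w ℓ j = w₀),
      Real.exp (-(β * Eperm N P d c L r σ w)) = μf w₀ * ∑ σ : Equiv.Perm (Fin N), T σ := by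
    rw [Finset.mul_sum]
    exact Finset.sum_congr rfl fun σ _ => hA σ
  have hden : ∑ σ' : Equiv.Perm (Fin N), ∑ w' ∈ WAll N P d W,
      Real.exp (-(β * Eperm N P d c L r σ' w'))
      = (∑ v ∈ windowSet d W, μf v) * ∑ σ : Equiv.Perm (Fin N), T σ := by
    rw [Finset.mul_sum]
    exact Finset.sum_congr rfl fun σ _ => hB σ
  calc ∑ σ : Equiv.Perm (Fin N),
        ∑ w ∈ (WAll N P d W).filter (fun w => w ℓ j = w₀),
          Real.exp (-(β * Eperm N P d c L r σ w)) /
            (∑ σ' : Equiv.Perm (Fin N), ∑ w' ∈ WAll N P d W,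
              Real.exp (-(β * Eperm N P d c L r σ' w')))
      = (∑ σ : Equiv.Perm (Fin N), ∑ w ∈ (WAll N P d W).filter (fun w => w ℓ j = w₀),
          Real.exp (-(β * Eperm N P d c L r σ w))) /
            (∑ σ' : Equiv.Perm (Fin N), ∑ w' ∈ WAll N P d W,
              Real.exp (-(β * Eperm N P d c L r σ' w'))) := by
        rw [Finset.sum_div]
        exact Finset.sum_congr rfl fun σ _ => (Finset.sum_div _ _ _).symm
    _ = (μf w₀ * ∑ σ : Equiv.Perm (Fin N), T σ) /
          ((∑ v ∈ windowSet d W, μf v) * ∑ σ : Equiv.Perm (Fin N), T σ) := by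
        rw [hnum, hden]
    _ = μf w₀ / ∑ v ∈ windowSet d W, μf v := by
        rw [mul_div_mul_right _ _ hTSpos.ne']

end
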